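/- Let $m$ be a positive integer, let $\rho > 0$ and $\ell \in (0, \rho]$, and let $y_1, \ldots, y_m \in [0,1]$ satisfy $\sum_{i=1}^m y_i = m(\rho - \ell)$. Define $h(y) = (1-y)^{1 + \ell/y}$ for $y \in (0,1]$ and $h(0) = e^{-\ell}$. Then $\sum_{i=1}^m h(y_i) \leq m \, e^{-\rho}$. -/

import Mathlib

lemma pointwise (ℓ : ℝ) (hℓ : 0 < ℓ) (t : ℝ) (ht : t ∈ Set.Icc (0:ℝ) 1) :
    (if t = 0 then Real.exp (-ℓ) else (1 - t) ^ (1 + ℓ / t))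
      ≤ Real.exp (-ℓ) * (1 - t) := by
  obtain ⟨ht0, ht1⟩ := ht
  by_cases h0 : t = 0
  · simp [h0]
  · rw [if_neg h0]
    have htpos : 0 < t := lt_of_le_of_ne ht0 (Ne.symm h0)
    rcases eq_or_lt_of_le ht1 with h1 | h1
    · have : (1 : ℝ) - t = 0 := by rw [← h1]; ring
      rw [this, Real.zero_rpow (by positivity)]
      simp
    · have hb : (0:ℝ) < 1 - t := by linarith
      rw [show (1:ℝ) + ℓ / t = ℓ / t + 1 by ring,
        Real.rpow_add hb, Real.rpow_one, mul_comm]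
      have h2 : (1 - t) ^ (ℓ / t) ≤ Real.exp (-ℓ) := by
        have h3 : (1:ℝ) - t ≤ Real.exp (-t) := by
          have := Real.add_one_le_exp (-t); linarith
        calc (1 - t) ^ (ℓ / t) ≤ (Real.exp (-t)) ^ (ℓ / t) :=
              Real.rpow_le_rpow hb.le h3 (by positivity)
          _ = Real.exp (-t * (ℓ / t)) := (Real.exp_mul _ _).symm
          _ = Real.exp (-ℓ) := by rw [show -t * (ℓ / t) = -ℓ by field_simp]
      nlinarith [h2, hb.le]

theorem stmt_11 (m : ℕ) (hm : 0 < m) (ρ ℓ : ℝ) (hρ : 0 < ρ) (hℓ : 0 < ℓ) (hℓρ : ℓ ≤ ρ)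
    (y : Fin m → ℝ) (hy : ∀ i, y i ∈ Set.Icc (0:ℝ) 1)
    (hsum : ∑ i, y i = (m : ℝ) * (ρ - ℓ)) :
    ∑ i, (if y i = 0 then Real.exp (-ℓ) else (1 - y i) ^ (1 + ℓ / y i))
      ≤ (m : ℝ) * Real.exp (-ρ) := by
  have step1 : ∑ i, (if y i = 0 then Real.exp (-ℓ) else (1 - y i) ^ (1 + ℓ / y i))
      ≤ ∑ i, Real.exp (-ℓ) * (1 - y i) :=
    Finset.sum_le_sum fun i _ => pointwise ℓ hℓ (y i) (hy i)
  have step2 : ∑ i, Real.exp (-ℓ) * (1 - y i)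
      = Real.exp (-ℓ) * ((m : ℝ) * (1 - (ρ - ℓ))) := by
    rw [← Finset.mul_sum, Finset.sum_sub_distrib, hsum]
    simp; ring
  have h3 : (1 : ℝ) - (ρ - ℓ) ≤ Real.exp (ℓ - ρ) := by
    have := Real.add_one_le_exp (ℓ - ρ); linarith
  have h4 : Real.exp (-ℓ) * ((m : ℝ) * (1 - (ρ - ℓ))) ≤ (m : ℝ) * Real.exp (-ρ) := by
    have hme : (0:ℝ) ≤ (m:ℝ) * Real.exp (-ℓ) := by positivity
    have := mul_le_mul_of_nonneg_left h3 hme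
    calc Real.exp (-ℓ) * ((m : ℝ) * (1 - (ρ - ℓ)))
        ≤ Real.exp (-ℓ) * ((m : ℝ) * Real.exp (ℓ - ρ)) := by nlinarith
      _ = (m : ℝ) * (Real.exp (-ℓ) * Real.exp (ℓ - ρ)) := by ring
      _ = (m : ℝ) * Real.exp (-ρ) := by rw [← Real.exp_add]; ring_nf
  calc _ ≤ _ := step1
    _ = _ := step2
    _ ≤ _ := h4
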